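/- John–Nirenberg inequality (normalized form): let f : ℝ → ℝ be locally integrable and suppose that mo(f,J) ≤ 1 for every bounded interval J of positive length. Then for every bounded interval I of positive length and every λ > 0, the Lebesgue measure of {x ∈ I : |f(x) − A(f,I)| > λ} is at most 2^{−(λ−1)/4} · |I|. -/

import Mathlib

open MeasureTheory Set

/-- The average of `f` over a set `I`: `A(f,I) = (1/|I|) ∫_I f`. -/
noncomputable def intAvg (f : ℝ → ℝ) (I : Set ℝ) : ℝ :=
  (∫ y in I, f y) / (volume I).toReal

/-- The mean oscillation of `f` over `I`: `mo(f,I) = (1/|I|) ∫_I |f - A(f,I)|`. -/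
noncomputable def meanOsc (f : ℝ → ℝ) (I : Set ℝ) : ℝ :=
  (∫ x in I, |f x - intAvg f I|) / (volume I).toReal

/-- `I` is a bounded interval of positive length in `ℝ`. -/
def IsBddInterval (I : Set ℝ) : Prop :=
  ∃ a b : ℝ, a < b ∧ Set.Ioo a b ⊆ I ∧ I ⊆ Set.Icc a b

namespace JN
variable {a b : ℝ}

/-- dyadic endpoint -/
noncomputable def e (a b : ℝ) (n j : ℕ) : ℝ := a + (b - a) * j / 2 ^ n

/-- dyadic interval of level n, index j -/
noncomputable def D (a b : ℝ) (n j : ℕ) : Set ℝ := Ico (e a b n j) (e a b n (j + 1))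

lemma e_le_e (hab : a < b) {n m j k : ℕ} (h : j * 2 ^ m ≤ k * 2 ^ n) :
    e a b n j ≤ e a b m k := by
  have hba : (0:ℝ) < b - a := by linarith
  have : (j : ℝ) * 2 ^ m ≤ (k : ℝ) * 2 ^ n := by exact_mod_cast h
  have h2n : (0:ℝ) < 2 ^ n := by positivity
  have h2m : (0:ℝ) < 2 ^ m := by positivity
  have : (j : ℝ) / 2 ^ n ≤ (k : ℝ) / 2 ^ m := by
    rw [div_le_div_iff₀ h2n h2m]; linarith
  simp only [e]
  rw [mul_div_assoc, mul_div_assoc]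
  nlinarith
lemma e_lt_e (hab : a < b) {n m j k : ℕ} (h : j * 2 ^ m < k * 2 ^ n) :
    e a b n j < e a b m k := by
  have hba : (0:ℝ) < b - a := by linarith
  have : (j : ℝ) * 2 ^ m < (k : ℝ) * 2 ^ n := by exact_mod_cast h
  have h2n : (0:ℝ) < 2 ^ n := by positivity
  have h2m : (0:ℝ) < 2 ^ m := by positivity
  have : (j : ℝ) / 2 ^ n < (k : ℝ) / 2 ^ m := by
    rw [div_lt_div_iff₀ h2n h2m]; linarith
  simp only [e]
  rw [mul_div_assoc, mul_div_assoc]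
  nlinarith

lemma e_zero (n : ℕ) : e a b n 0 = a := by simp [e]
lemma e_last (n : ℕ) : e a b n (2 ^ n) = b := by
  simp only [e]
  push_cast
  rw [mul_div_assoc, div_self (by positivity), mul_one]; ring

lemma D_subset_Ico (hab : a < b) {n j : ℕ} (hj : j < 2 ^ n) : D a b n j ⊆ Ico a b := by
  intro x hx
  constructor
  · calc a = e a b n 0 := (e_zero n).symm
    _ ≤ e a b n j := e_le_e hab (by simp)
    _ ≤ x := hx.1
  · calc x < e a b n (j+1) := hx.2
    _ ≤ e a b n (2 ^ n) := e_le_e hab (by nlinarith)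
    _ = b := e_last n

lemma D_subset_parent (hab : a < b) (n k : ℕ) : D a b (n+1) k ⊆ D a b n (k / 2) := by
  apply Ico_subset_Ico
  · exact e_le_e hab (by
      calc k / 2 * 2 ^ (n+1) = (k/2*2) * 2^n := by ring
      _ ≤ k * 2 ^ n := by
        have := Nat.div_mul_le_self k 2
        exact Nat.mul_le_mul_right _ this)
  · exact e_le_e hab (by
      have hk : k + 1 ≤ (k/2 + 1) * 2 := by omega
      calc (k+1) * 2 ^ n ≤ ((k/2+1)*2) * 2 ^ n := Nat.mul_le_mul_right _ hk
      _ = (k/2+1) * 2 ^ (n+1) := by ring)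

lemma D_subset_ancestor (hab : a < b) {m n : ℕ} (h : m ≤ n) (k : ℕ) :
    D a b n k ⊆ D a b m (k / 2 ^ (n - m)) := by
  induction n generalizing k with
  | zero =>
    have : m = 0 := Nat.le_zero.mp h
    subst this; simp
  | succ n ih =>
    rcases Nat.eq_or_lt_of_le h with h1 | h1
    · subst h1; simp
    · have hm : m ≤ n := Nat.lt_succ_iff.mp h1
      have h2 : D a b (n+1) k ⊆ D a b n (k / 2) := D_subset_parent hab n k
      refine h2.trans ((ih hm (k / 2)).trans ?_)
      have h3 : k / 2 / 2 ^ (n - m) = k / 2 ^ (n + 1 - m) := by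
        rw [Nat.div_div_eq_div_mul, ← pow_succ']
        congr 2
        omega
      rw [h3]

lemma D_disjoint (hab : a < b) {n j j' : ℕ} (h : j ≠ j') :
    Disjoint (D a b n j) (D a b n j') := by
  wlog hlt : j < j' generalizing j j'
  · exact (this h.symm (by omega)).symm
  rw [Set.disjoint_left]
  rintro x ⟨_, hx2⟩ ⟨hx1', _⟩
  have : e a b n (j+1) ≤ e a b n j' := e_le_e hab (Nat.mul_le_mul_right _ (by omega))
  linarith

lemma e_le_iff (hab : a < b) {n j : ℕ} {x : ℝ} :
    e a b n j ≤ x ↔ (j:ℝ) ≤ (x - a) * 2 ^ n / (b - a) := by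
  have hba : (0:ℝ) < b - a := by linarith
  have h2 : (0:ℝ) < 2 ^ n := by positivity
  simp only [e]
  have h3 : a + (b - a) * j / 2 ^ n ≤ x ↔ (b - a) * j / 2 ^ n ≤ x - a := by
    constructor <;> intro <;> linarith
  rw [h3, div_le_iff₀ h2, le_div_iff₀ hba]
  constructor <;> intro h <;> nlinarith

lemma lt_e_iff (hab : a < b) {n j : ℕ} {x : ℝ} :
    x < e a b n j ↔ (x - a) * 2 ^ n / (b - a) < (j:ℝ) := by
  have hba : (0:ℝ) < b - a := by linarith
  have h2 : (0:ℝ) < 2 ^ n := by positivity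
  simp only [e]
  have h3 : x < a + (b - a) * j / 2 ^ n ↔ x - a < (b - a) * j / 2 ^ n := by
    constructor <;> intro <;> linarith
  rw [h3, lt_div_iff₀ h2, div_lt_iff₀ hba]
  constructor <;> intro h <;> nlinarith

/-- index of dyadic interval of level n containing x -/
noncomputable def idx (a b : ℝ) (n : ℕ) (x : ℝ) : ℕ := ⌊(x - a) * 2 ^ n / (b - a)⌋₊

lemma idx_lt (hab : a < b) {n : ℕ} {x : ℝ} (hx : x ∈ Ico a b) : idx a b n x < 2 ^ n := by
  have hba : (0:ℝ) < b - a := by linarith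
  have hnn : 0 ≤ (x - a) * 2 ^ n / (b - a) := by
    have : 0 ≤ x - a := by linarith [hx.1]
    positivity
  rw [idx, Nat.floor_lt hnn]
  push_cast
  rw [div_lt_iff₀ hba]
  have h4 : x - a < b - a := by linarith [hx.2]
  have h2 : (0:ℝ) < 2 ^ n := by positivity
  nlinarith [mul_lt_mul_of_pos_right h4 h2]

lemma mem_D_idx (hab : a < b) {n : ℕ} {x : ℝ} (hx : x ∈ Ico a b) :
    x ∈ D a b n (idx a b n x) := by
  have hba : (0:ℝ) < b - a := by linarith
  have hnn : 0 ≤ (x - a) * 2 ^ n / (b - a) := by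
    have : 0 ≤ x - a := by linarith [hx.1]
    positivity
  constructor
  · rw [e_le_iff hab]; exact Nat.floor_le hnn
  · rw [lt_e_iff hab]; push_cast; exact Nat.lt_floor_add_one _

lemma idx_eq (hab : a < b) {n j : ℕ} {x : ℝ} (hx : x ∈ Ico a b) (hxD : x ∈ D a b n j) :
    j = idx a b n x := by
  by_contra h
  exact (D_disjoint hab h).ne_of_mem hxD (mem_D_idx hab hx) rfl

lemma idx_ancestor (hab : a < b) {m n : ℕ} (h : m ≤ n) {x : ℝ} (hx : x ∈ Ico a b) :
    idx a b m x = idx a b n x / 2 ^ (n - m) := by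
  have h1 : x ∈ D a b m (idx a b n x / 2 ^ (n - m)) :=
    D_subset_ancestor hab h _ (mem_D_idx hab hx)
  exact (idx_eq hab hx h1).symm

lemma volume_D (hab : a < b) (n j : ℕ) :
    volume (D a b n j) = ENNReal.ofReal ((b - a) / 2 ^ n) := by
  rw [D, Real.volume_Ico]
  congr 1
  simp only [e]
  push_cast
  ring

lemma e_lt_succ (hab : a < b) (n j : ℕ) : e a b n j < e a b n (j + 1) :=
  e_lt_e hab (by nlinarith [pow_pos (show 0 < 2 by norm_num) n])

section CZ
variable {a b : ℝ} {g : ℝ → ℝ}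

/-- CZ selected (stopping-time) dyadic intervals: average exceeds 2, minimal level. -/
def Sel (a b : ℝ) (g : ℝ → ℝ) : Set (ℕ × ℕ) :=
  {p | p.2 < 2 ^ p.1 ∧ 2 < intAvg g (D a b p.1 p.2) ∧
    ∀ m < p.1, intAvg g (D a b m (p.2 / 2 ^ (p.1 - m))) ≤ 2}

def U (a b : ℝ) (g : ℝ → ℝ) : Set ℝ := ⋃ p ∈ Sel a b g, D a b p.1 p.2

lemma vol_D_toReal (hab : a < b) (n j : ℕ) :
    (volume (D a b n j)).toReal = (b - a) / 2 ^ n := by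
  have : (0:ℝ) ≤ (b - a) / 2 ^ n := by
    have : (0:ℝ) ≤ b - a := by linarith
    positivity
  rw [volume_D hab, ENNReal.toReal_ofReal this]

lemma integrableOn_D (hg : LocallyIntegrable g volume) (n j : ℕ) :
    IntegrableOn g (D a b n j) volume :=
  (hg.integrableOn_isCompact isCompact_Icc).mono_set Ico_subset_Icc_self

lemma integrableOn_Ico (hg : LocallyIntegrable g volume) {c d : ℝ} :
    IntegrableOn g (Ico c d) volume :=
  (hg.integrableOn_isCompact isCompact_Icc).mono_set Ico_subset_Icc_self

lemma D_zero_zero : D a b 0 0 = Ico a b := by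
  simp [D, e]

lemma Sel_disjoint (hab : a < b) {p q : ℕ × ℕ} (hp : p ∈ Sel a b g) (hq : q ∈ Sel a b g)
    (hpq : p ≠ q) : Disjoint (D a b p.1 p.2) (D a b q.1 q.2) := by
  wlog hle : p.1 ≤ q.1 generalizing p q
  · exact (this hq hp hpq.symm (by omega)).symm
  rw [Set.disjoint_left]
  intro x hxp hxq
  have hxI : x ∈ Ico a b := D_subset_Ico hab hq.1 hxq
  have hjp : p.2 = idx a b p.1 x := idx_eq hab hxI hxp
  have hjq : q.2 = idx a b q.1 x := idx_eq hab hxI hxq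
  rcases Nat.eq_or_lt_of_le hle with h1 | h1
  · apply hpq
    have : p.2 = q.2 := by rw [hjp, hjq, h1]
    exact Prod.ext h1 this
  · have h2 := hq.2.2 p.1 h1
    have h3 : q.2 / 2 ^ (q.1 - p.1) = idx a b p.1 x := by
      rw [hjq, ← idx_ancestor hab (le_of_lt h1) hxI]
    rw [h3, ← hjp] at h2
    linarith [hp.2.1]

lemma avg_le_two_of_notMem_U (hab : a < b) {x : ℝ} (hx : x ∈ Ico a b) (hxU : x ∉ U a b g) :
    ∀ n, intAvg g (D a b n (idx a b n x)) ≤ 2 := by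
  intro n
  by_contra hlt
  push_neg at hlt
  have hex : ∃ m, 2 < intAvg g (D a b m (idx a b m x)) := ⟨n, hlt⟩
  apply hxU
  refine mem_biUnion (show ((Nat.find hex), idx a b (Nat.find hex) x) ∈ Sel a b g from ?_)
    (mem_D_idx hab hx)
  refine ⟨idx_lt hab hx, Nat.find_spec hex, fun m hm => ?_⟩
  have h1 := Nat.find_min hex hm
  push_neg at h1
  have h2 : idx a b (Nat.find hex) x / 2 ^ (Nat.find hex - m) = idx a b m x :=
    (idx_ancestor hab (le_of_lt hm) hx).symm
  rw [h2]
  exact h1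

lemma Sel_n_pos (hab : a < b) (havg : intAvg g (Ico a b) ≤ 1) {p : ℕ × ℕ}
    (hp : p ∈ Sel a b g) : p.1 ≠ 0 := by
  intro h0
  obtain ⟨hj, h2, -⟩ := hp
  rw [h0] at hj
  have : p.2 = 0 := by omega
  rw [h0, this, D_zero_zero] at h2
  linarith

lemma avg_gt_two (hp : p ∈ Sel a b g) : 2 < intAvg g (D a b p.1 p.2) := hp.2.1

lemma avg_le_four (hab : a < b) (hg : LocallyIntegrable g volume) (hg0 : ∀ x, 0 ≤ g x)
    (havg : intAvg g (Ico a b) ≤ 1) {p : ℕ × ℕ} (hp : p ∈ Sel a b g) :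
    intAvg g (D a b p.1 p.2) ≤ 4 := by
  obtain ⟨n, j⟩ := p
  have hn : n ≠ 0 := Sel_n_pos hab havg hp
  have hsub1 : n - (n-1) = 1 := by omega
  have hpar : intAvg g (D a b (n-1) (j / 2)) ≤ 2 := by
    have := hp.2.2 (n-1) (by omega)
    rwa [hsub1, pow_one] at this
  have hsub : D a b n j ⊆ D a b (n-1) (j / 2) := by
    have := D_subset_ancestor hab (show n - 1 ≤ n by omega) j
    rwa [hsub1, pow_one] at this
  have hint : ∫ x in D a b n j, g x ≤ ∫ x in D a b (n-1) (j / 2), g x :=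
    setIntegral_mono_set (integrableOn_D hg _ _)
      (Filter.Eventually.of_forall fun x => hg0 x) (HasSubset.Subset.eventuallyLE hsub)
  have hba : (0:ℝ) < b - a := by linarith
  set L : ℝ := (b - a) / 2 ^ n with hL
  have hLpos : 0 < L := by positivity
  have h2L : (b - a) / 2 ^ (n-1) = 2 * L := by
    rw [hL]
    have h2n : (2:ℝ) ^ n = 2 ^ (n-1) * 2 := by
      rw [← pow_succ]
      congr 1
      omega
    rw [h2n]
    field_simp
  have hSP : ∫ x in D a b (n-1) (j / 2), g x ≤ 2 * (2 * L) := by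
    have := hpar
    rw [intAvg, vol_D_toReal hab, h2L, div_le_iff₀ (by positivity)] at this
    linarith
  rw [intAvg, vol_D_toReal hab, ← hL, div_le_iff₀ hLpos]
  linarith

lemma volume_U_le (hab : a < b) (hg : LocallyIntegrable g volume) (hg0 : ∀ x, 0 ≤ g x)
    (havg : intAvg g (Ico a b) ≤ 1) :
    volume (U a b g) ≤ ENNReal.ofReal ((b - a) / 2) := by
  classical
  have hba : (0:ℝ) < b - a := by linarith
  have hcnt : (Sel a b g).Countable := Set.to_countable _
  haveI := hcnt.to_subtype
  have hU : U a b g = ⋃ p : Sel a b g, D a b p.1.1 p.1.2 := biUnion_eq_iUnion _ _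
  have hmeas : ∀ p : Sel a b g, MeasurableSet (D a b p.1.1 p.1.2) := fun _ => measurableSet_Ico
  have hdisj : Pairwise (Function.onFun Disjoint fun p : Sel a b g => D a b p.1.1 p.1.2) := by
    intro p q hpq
    exact Sel_disjoint hab p.2 q.2 (fun h => hpq (Subtype.ext h))
  have key : ∀ p : Sel a b g, 2 * volume (D a b p.1.1 p.1.2) ≤
      ∫⁻ x in D a b p.1.1 p.1.2, ENNReal.ofReal (g x) := by
    intro p
    have hL : (0:ℝ) < (b - a) / 2 ^ p.1.1 := by positivity
    have h2 : 2 * ((b - a) / 2 ^ p.1.1) ≤ ∫ x in D a b p.1.1 p.1.2, g x := by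
      have := avg_gt_two p.2
      rw [intAvg, vol_D_toReal hab] at this
      rw [lt_div_iff₀ hL] at this
      linarith
    calc 2 * volume (D a b p.1.1 p.1.2)
        = ENNReal.ofReal (2 * ((b - a) / 2 ^ p.1.1)) := by
          rw [volume_D hab, ENNReal.ofReal_mul (by norm_num : (0:ℝ) ≤ 2)]
          norm_num
      _ ≤ ENNReal.ofReal (∫ x in D a b p.1.1 p.1.2, g x) := ENNReal.ofReal_le_ofReal h2
      _ = ∫⁻ x in D a b p.1.1 p.1.2, ENNReal.ofReal (g x) :=
          ofReal_integral_eq_lintegral_ofReal (integrableOn_D hg _ _)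
            (Filter.Eventually.of_forall fun x => hg0 x)
  have main : 2 * volume (U a b g) ≤ ENNReal.ofReal (b - a) := by
    calc 2 * volume (U a b g) = 2 * ∑' p : Sel a b g, volume (D a b p.1.1 p.1.2) := by
          rw [hU, measure_iUnion hdisj hmeas]
      _ = ∑' p : Sel a b g, 2 * volume (D a b p.1.1 p.1.2) := ENNReal.tsum_mul_left.symm
      _ ≤ ∑' p : Sel a b g, ∫⁻ x in D a b p.1.1 p.1.2, ENNReal.ofReal (g x) :=
          ENNReal.tsum_le_tsum key
      _ = ∫⁻ x in ⋃ p : Sel a b g, D a b p.1.1 p.1.2, ENNReal.ofReal (g x) :=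
          (lintegral_iUnion (fun p => hmeas p) hdisj _).symm
      _ ≤ ∫⁻ x in Ico a b, ENNReal.ofReal (g x) := by
          apply lintegral_mono_set
          apply iUnion_subset
          intro p
          exact D_subset_Ico hab p.2.1
      _ = ENNReal.ofReal (∫ x in Ico a b, g x) :=
          (ofReal_integral_eq_lintegral_ofReal (integrableOn_Ico hg)
            (Filter.Eventually.of_forall fun x => hg0 x)).symm
      _ ≤ ENNReal.ofReal (b - a) := by
          apply ENNReal.ofReal_le_ofReal
          have := havg
          rw [intAvg, Real.volume_Ico, ENNReal.toReal_ofReal hba.le, div_le_one hba] at this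
          exact this
  have h2 : volume (U a b g) ≤ ENNReal.ofReal (b - a) / 2 := by
    rw [ENNReal.le_div_iff_mul_le (by norm_num) (by norm_num)]
    rw [mul_comm]
    exact main
  calc volume (U a b g) ≤ ENNReal.ofReal (b - a) / 2 := h2
    _ = ENNReal.ofReal ((b - a) / 2) := by
        rw [ENNReal.ofReal_div_of_pos (by norm_num : (0:ℝ) < 2)]
        norm_num

lemma e_succ (n j : ℕ) : e a b n (j + 1) = e a b n j + (b - a) / 2 ^ n := by
  simp only [e]
  push_cast
  ring

lemma ae_g_le_two (hab : a < b) (hg : LocallyIntegrable g volume) (hg0 : ∀ x, 0 ≤ g x) :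
    volume {x | x ∈ Ico a b \ U a b g ∧ 2 < g x} = 0 := by
  have hba : (0:ℝ) < b - a := by linarith
  rw [measure_eq_zero_iff_ae_notMem]
  have hD := IsUnifLocDoublingMeasure.ae_tendsto_average_norm_sub (μ := volume) hg 1
  filter_upwards [hD] with x hx
  rintro ⟨⟨hxI, hxU⟩, hgt⟩
  set δ : ℕ → ℝ := fun n => (b - a) / 2 ^ n with hδ
  have hδpos : ∀ n, 0 < δ n := fun n => by positivity
  have hδlim : Filter.Tendsto δ Filter.atTop (nhdsWithin 0 (Ioi 0)) := by
    rw [tendsto_nhdsWithin_iff]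
    constructor
    · have h1 : Filter.Tendsto (fun n : ℕ => (b - a) * (1/2 : ℝ)^n) Filter.atTop (nhds 0) := by
        simpa using (tendsto_pow_atTop_nhds_zero_of_lt_one (by norm_num : (0:ℝ) ≤ 1/2)
          (by norm_num : (1/2:ℝ) < 1)).const_mul (b - a)
      convert h1 using 2 with n
      rw [hδ]
      simp [div_eq_mul_inv, inv_pow]
    · exact Filter.Eventually.of_forall fun n => hδpos n
  have hL : Filter.Tendsto (fun n => ⨍ y in Metric.closedBall x (δ n), ‖g y - g x‖)
      Filter.atTop (nhds 0) :=
    hx (fun _ => x) δ hδlim (Filter.Eventually.of_forall fun n => by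
      rw [Metric.mem_closedBall, dist_self]
      positivity)
  have key : ∀ n, g x - 2 ≤ 2 * ⨍ y in Metric.closedBall x (δ n), ‖g y - g x‖ := by
    intro n
    have hxD : x ∈ D a b n (idx a b n x) := mem_D_idx hab hxI
    have havgD : intAvg g (D a b n (idx a b n x)) ≤ 2 := avg_le_two_of_notMem_U hab hxI hxU n
    set Dn := D a b n (idx a b n x) with hDn
    have he : e a b n (idx a b n x + 1) = e a b n (idx a b n x) + δ n := e_succ n _
    have hDsub : Dn ⊆ Metric.closedBall x (δ n) := by
      intro y hy
      rw [Metric.mem_closedBall, Real.dist_eq, abs_le]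
      obtain ⟨hy1, hy2⟩ := hy
      obtain ⟨hx1, hx2⟩ := hxD
      rw [he] at hy2 hx2
      constructor <;> linarith
    have hvol : volume (Metric.closedBall x (δ n)) < ⊤ := by
      rw [Real.volume_closedBall]; exact ENNReal.ofReal_lt_top
    have hIcb : IntegrableOn (fun y => ‖g y - g x‖) (Metric.closedBall x (δ n)) volume := by
      apply Integrable.norm
      exact (hg.integrableOn_isCompact (isCompact_closedBall x (δ n))).sub
        (integrableOn_const hvol.ne)
    have h1 : ∫ y in Dn, ‖g y - g x‖ ≤ ∫ y in Metric.closedBall x (δ n), ‖g y - g x‖ :=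
      setIntegral_mono_set hIcb (Filter.Eventually.of_forall fun y => norm_nonneg _)
        (HasSubset.Subset.eventuallyLE hDsub)
    have hIDn : IntegrableOn g Dn volume := integrableOn_D hg _ _
    have hvolDn : volume Dn < ⊤ := by
      rw [hDn, volume_D hab]; exact ENNReal.ofReal_lt_top
    have hIconst : IntegrableOn (fun _ => g x) Dn volume := integrableOn_const hvolDn.ne
    have h2 : g x * δ n - ∫ y in Dn, g y ≤ ∫ y in Dn, ‖g y - g x‖ := by
      have e1 : ∫ y in Dn, (g x - g y) = g x * δ n - ∫ y in Dn, g y := by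
        rw [integral_sub hIconst hIDn, setIntegral_const, measureReal_def, hDn, vol_D_toReal hab, smul_eq_mul]
        simp only [hδ]; ring
      rw [← e1]
      exact integral_mono (hIconst.sub hIDn) (hIcb.mono_set hDsub)
        (fun y => by rw [Real.norm_eq_abs, abs_sub_comm]; exact le_abs_self _)
    have h3 : ∫ y in Dn, g y ≤ 2 * δ n := by
      rw [hDn, intAvg, vol_D_toReal hab, div_le_iff₀ (hδpos n)] at havgD
      linarith
    have h4 : ⨍ y in Metric.closedBall x (δ n), ‖g y - g x‖ =
        (∫ y in Metric.closedBall x (δ n), ‖g y - g x‖) / (2 * δ n) := by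
      rw [setAverage_eq, measureReal_def, Real.volume_closedBall, ENNReal.toReal_ofReal (by positivity),
        smul_eq_mul, inv_mul_eq_div]
    rw [h4]
    have hδn := hδpos n
    have h5 : 2 * ((∫ y in Metric.closedBall x (δ n), ‖g y - g x‖) / (2 * δ n)) =
        (∫ y in Metric.closedBall x (δ n), ‖g y - g x‖) / δ n := by
      field_simp
    rw [h5, le_div_iff₀ hδn]
    nlinarith [h1, h2, h3]
  have h6 : Filter.Tendsto (fun n => 2 * ⨍ y in Metric.closedBall x (δ n), ‖g y - g x‖)
      Filter.atTop (nhds 0) := by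
    simpa using hL.const_mul 2
  have h7 : g x - 2 ≤ 0 := ge_of_tendsto h6 (Filter.Eventually.of_forall key)
  linarith

end CZ

section MAIN

/-- convexity bound: `2^t ≤ 1 + t` for `t ∈ [0,1]` -/
lemma two_rpow_le_one_add {t : ℝ} (h0 : 0 ≤ t) (h1 : t ≤ 1) : (2:ℝ) ^ t ≤ 1 + t := by
  have h := convexOn_exp.2 (mem_univ (0:ℝ)) (mem_univ (Real.log 2))
    (by linarith : (0:ℝ) ≤ 1 - t) h0 (by ring)
  simp only [smul_eq_mul, mul_zero, zero_add, Real.exp_zero, Real.exp_log (by norm_num : (0:ℝ) < 2)]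
  at h
  rw [Real.rpow_def_of_pos (by norm_num : (0:ℝ) < 2)]
  calc Real.exp (Real.log 2 * t) = Real.exp (t * Real.log 2) := by rw [mul_comm]
    _ ≤ (1 - t) * 1 + t * 2 := h
    _ = 1 + t := by ring

lemma abs_intAvg_sub_le {f : ℝ → ℝ} {s : Set ℝ} (hs : IntegrableOn f s volume)
    (hV : 0 < (volume s).toReal) (K : ℝ) :
    |intAvg f s - K| ≤ intAvg (fun x => |f x - K|) s := by
  have hVfin : volume s ≠ ⊤ := by
    intro h
    rw [h] at hV
    simp at hV
  have e1 : intAvg f s - K = (∫ x in s, (f x - K)) / (volume s).toReal := by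
    rw [integral_sub hs (integrableOn_const hVfin),
      setIntegral_const, measureReal_def, smul_eq_mul, intAvg]
    field_simp
  rw [e1, intAvg, abs_div, abs_of_pos hV]
  gcongr
  calc |∫ x in s, (f x - K)| = ‖∫ x in s, (f x - K)‖ := (Real.norm_eq_abs _).symm
    _ ≤ ∫ x in s, ‖f x - K‖ := norm_integral_le_integral_norm _
    _ = ∫ x in s, |f x - K| := by simp [Real.norm_eq_abs]

variable {f : ℝ → ℝ}

lemma g_loc (hf : LocallyIntegrable f volume) (K : ℝ) :
    LocallyIntegrable (fun x => |f x - K|) volume := by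
  have h1 : LocallyIntegrable (fun x => f x - K) volume :=
    hf.sub (locallyIntegrable_const K)
  rw [locallyIntegrable_iff] at h1 ⊢
  intro s hs
  simpa [Real.norm_eq_abs, IntegrableOn] using (h1 s hs).norm

lemma isBddInterval_Ico {c d : ℝ} (h : c < d) : IsBddInterval (Ico c d) :=
  ⟨c, d, h, Ioo_subset_Ico_self, Ico_subset_Icc_self⟩

lemma meanOsc_eq (I : Set ℝ) : meanOsc f I = intAvg (fun x => |f x - intAvg f I|) I := rfl

/-- Chebyshev / Markov base estimate. -/
lemma cheb (hf : LocallyIntegrable f volume) {a b lam : ℝ} (hab : a < b) (hlam : 0 < lam)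
    (hint : ∫ x in Ico a b, |f x - intAvg f (Ico a b)| ≤ b - a) :
    volume {x ∈ Ico a b | lam < |f x - intAvg f (Ico a b)|} ≤
      ENNReal.ofReal ((b - a) / lam) := by
  set g : ℝ → ℝ := fun x => |f x - intAvg f (Ico a b)| with hg
  have hgint : IntegrableOn g (Ico a b) volume := integrableOn_Ico (g_loc hf _)
  have h := mul_meas_ge_le_integral_of_nonneg (μ := volume.restrict (Ico a b))
    (f := g) (Filter.Eventually.of_forall fun x => abs_nonneg _) hgint lam
  have hres : (volume.restrict (Ico a b)) {x | lam ≤ g x} = volume ({x | lam ≤ g x} ∩ Ico a b) :=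
    Measure.restrict_apply' measurableSet_Ico
  have hfin : volume ({x | lam ≤ g x} ∩ Ico a b) < ⊤ :=
    lt_of_le_of_lt (measure_mono inter_subset_right) (by rw [Real.volume_Ico]; exact ENNReal.ofReal_lt_top)
  have hsub : {x ∈ Ico a b | lam < g x} ⊆ {x | lam ≤ g x} ∩ Ico a b := by
    rintro x ⟨hx1, hx2⟩
    exact ⟨le_of_lt hx2, hx1⟩
  calc volume {x ∈ Ico a b | lam < g x} ≤ volume ({x | lam ≤ g x} ∩ Ico a b) :=
        measure_mono hsub
    _ = ENNReal.ofReal ((volume ({x | lam ≤ g x} ∩ Ico a b)).toReal) :=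
        (ENNReal.ofReal_toReal hfin.ne).symm
    _ ≤ ENNReal.ofReal ((b - a) / lam) := by
        apply ENNReal.ofReal_le_ofReal
        rw [le_div_iff₀ hlam, mul_comm]
        rw [measureReal_def, hres] at h
        exact h.trans hint
lemma base (hf : LocallyIntegrable f volume) (hmo : ∀ J, IsBddInterval J → meanOsc f J ≤ 1)
    {a b lam : ℝ} (hab : a < b) (h0 : 0 < lam) (h5 : lam ≤ 5) :
    volume {x ∈ Ico a b | lam < |f x - intAvg f (Ico a b)|} ≤
      ENNReal.ofReal ((2:ℝ) ^ (-(lam - 1) / 4) * (b - a)) := by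
  have hba : (0:ℝ) < b - a := by linarith
  have havg : intAvg (fun x => |f x - intAvg f (Ico a b)|) (Ico a b) ≤ 1 := by
    rw [← meanOsc_eq]; exact hmo _ (isBddInterval_Ico hab)
  have hint : ∫ x in Ico a b, |f x - intAvg f (Ico a b)| ≤ b - a := by
    rw [intAvg, Real.volume_Ico, ENNReal.toReal_ofReal hba.le, div_le_one hba] at havg
    exact havg
  by_cases h1 : lam ≤ 1
  · have h2 : (1:ℝ) ≤ (2:ℝ) ^ (-(lam - 1) / 4) :=
      Real.one_le_rpow (by norm_num) (by linarith)
    calc volume {x ∈ Ico a b | lam < |f x - intAvg f (Ico a b)|}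
        ≤ volume (Ico a b) := measure_mono (sep_subset _ _)
      _ = ENNReal.ofReal (b - a) := Real.volume_Ico
      _ ≤ ENNReal.ofReal ((2:ℝ) ^ (-(lam - 1) / 4) * (b - a)) :=
          ENNReal.ofReal_le_ofReal (by nlinarith)
  · push_neg at h1
    refine (cheb hf hab h0 hint).trans (ENNReal.ofReal_le_ofReal ?_)
    set t : ℝ := (lam - 1) / 4 with ht
    have ht0 : 0 ≤ t := by rw [ht]; linarith
    have ht1 : t ≤ 1 := by rw [ht]; linarith
    have h2t : (2:ℝ) ^ t ≤ lam := (two_rpow_le_one_add ht0 ht1).trans (by rw [ht]; linarith)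
    have hpos : (0:ℝ) < (2:ℝ) ^ t := Real.rpow_pos_of_pos (by norm_num) t
    have hneg : (2:ℝ) ^ (-(lam - 1) / 4) = ((2:ℝ) ^ t)⁻¹ := by
      rw [show -(lam - 1) / 4 = -t by rw [ht]; ring, Real.rpow_neg (by norm_num)]
    have hinv : lam⁻¹ ≤ ((2:ℝ) ^ t)⁻¹ := by
      apply inv_anti₀ hpos h2t
    calc (b - a) / lam = (b - a) * lam⁻¹ := div_eq_mul_inv _ _
      _ ≤ (b - a) * ((2:ℝ) ^ t)⁻¹ := mul_le_mul_of_nonneg_left hinv hba.le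
      _ = (2:ℝ) ^ (-(lam - 1) / 4) * (b - a) := by rw [hneg]; ring

lemma core (hf : LocallyIntegrable f volume)
    (hmo : ∀ J, IsBddInterval J → meanOsc f J ≤ 1) :
    ∀ N : ℕ, ∀ lam : ℝ, 0 < lam → lam ≤ 4 * N + 5 → ∀ a b : ℝ, a < b →
      volume {x ∈ Ico a b | lam < |f x - intAvg f (Ico a b)|} ≤
        ENNReal.ofReal ((2:ℝ) ^ (-(lam - 1) / 4) * (b - a)) := by
  intro N
  induction N with
  | zero =>
    intro lam h0 hle a b hab
    exact base hf hmo hab h0 (by push_cast at hle; linarith)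
  | succ N ih =>
    intro lam hpos hle a b hab
    by_cases hbc : lam ≤ 4 * N + 5
    · exact ih lam hpos hbc a b hab
    push_neg at hbc
    have h5 : 5 < lam := by
      have : (0:ℝ) ≤ (N:ℝ) := Nat.cast_nonneg N
      linarith
    have hba : (0:ℝ) < b - a := by linarith
    set A := intAvg f (Ico a b) with hA
    set g : ℝ → ℝ := fun x => |f x - A| with hgdef
    have hgloc : LocallyIntegrable g volume := g_loc hf A
    have hg0 : ∀ x, 0 ≤ g x := fun x => abs_nonneg _
    have havg : intAvg g (Ico a b) ≤ 1 := by
      rw [hgdef, hA, ← meanOsc_eq]; exact hmo _ (isBddInterval_Ico hab)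
    have hgx : ∀ x, g x = |f x - A| := fun x => rfl
    have hnull : volume ({x ∈ Ico a b | lam < g x} \ U a b g) = 0 := by
      apply measure_mono_null _ (ae_g_le_two hab hgloc hg0)
      rintro x ⟨⟨hx1, hx2⟩, hxU⟩
      exact ⟨⟨hx1, hxU⟩, by linarith⟩
    have hcnt : (Sel a b g).Countable := Set.to_countable _
    haveI := hcnt.to_subtype
    have hmeas : ∀ p : Sel a b g, MeasurableSet (D a b p.1.1 p.1.2) := fun _ => measurableSet_Ico
    have hdisj : Pairwise (Function.onFun Disjoint fun p : Sel a b g => D a b p.1.1 p.1.2) :=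
      fun p q hpq => Sel_disjoint hab p.2 q.2 (fun h => hpq (Subtype.ext h))
    have hincl : {x ∈ Ico a b | lam < g x} ∩ U a b g ⊆
        ⋃ p : Sel a b g,
          {x ∈ D a b p.1.1 p.1.2 | lam - 4 < |f x - intAvg f (D a b p.1.1 p.1.2)|} := by
      rintro x ⟨⟨hxI, hxg⟩, hxU⟩
      rw [U, mem_iUnion₂] at hxU
      obtain ⟨p, hp, hxD⟩ := hxU
      refine mem_iUnion.2 ⟨⟨p, hp⟩, hxD, ?_⟩
      have hVpos : 0 < (volume (D a b p.1 p.2)).toReal := by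
        rw [vol_D_toReal hab]; positivity
      have hintf : IntegrableOn f (D a b p.1 p.2) volume := integrableOn_D hf p.1 p.2
      have h4 : |intAvg f (D a b p.1 p.2) - A| ≤ 4 :=
        (abs_intAvg_sub_le hintf hVpos A).trans (avg_le_four hab hgloc hg0 havg hp)
      have htri : |f x - A| ≤ |f x - intAvg f (D a b p.1 p.2)| + |intAvg f (D a b p.1 p.2) - A| :=
        abs_sub_le _ _ _
      have hgxx : lam < |f x - A| := hxg
      linarith
    have hlam4 : 0 < lam - 4 := by linarith
    have hlam4' : lam - 4 ≤ 4 * N + 5 := by push_cast at hle; linarith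
    have hcpos : (0:ℝ) ≤ (2:ℝ) ^ (-(lam - 4 - 1) / 4) := (Real.rpow_pos_of_pos (by norm_num) _).le
    have hpiece : ∀ p : Sel a b g,
        volume {x ∈ D a b p.1.1 p.1.2 | lam - 4 < |f x - intAvg f (D a b p.1.1 p.1.2)|} ≤
          ENNReal.ofReal ((2:ℝ) ^ (-(lam - 4 - 1) / 4)) * volume (D a b p.1.1 p.1.2) := by
      intro p
      have hcd : e a b p.1.1 p.1.2 < e a b p.1.1 (p.1.2 + 1) := e_lt_succ hab _ _
      have hIH := ih (lam - 4) hlam4 hlam4' (e a b p.1.1 p.1.2) (e a b p.1.1 (p.1.2 + 1)) hcd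
      rw [show Ico (e a b p.1.1 p.1.2) (e a b p.1.1 (p.1.2 + 1)) = D a b p.1.1 p.1.2 from rfl]
        at hIH
      refine hIH.trans ?_
      rw [volume_D hab, ← ENNReal.ofReal_mul hcpos]
      apply ENNReal.ofReal_le_ofReal
      have hlen : e a b p.1.1 (p.1.2 + 1) - e a b p.1.1 p.1.2 = (b - a) / 2 ^ p.1.1 := by
        rw [e_succ]; ring
      rw [hlen]
    have hUeq : volume (U a b g) = ∑' p : Sel a b g, volume (D a b p.1.1 p.1.2) := by
      rw [show U a b g = ⋃ p : Sel a b g, D a b p.1.1 p.1.2 from biUnion_eq_iUnion _ _,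
        measure_iUnion hdisj hmeas]
    calc volume {x ∈ Ico a b | lam < |f x - A|}
        ≤ volume ({x ∈ Ico a b | lam < g x} ∩ U a b g) +
            volume ({x ∈ Ico a b | lam < g x} \ U a b g) := measure_le_inter_add_diff _ _ _
      _ = volume ({x ∈ Ico a b | lam < g x} ∩ U a b g) := by rw [hnull, add_zero]
      _ ≤ volume (⋃ p : Sel a b g,
            {x ∈ D a b p.1.1 p.1.2 | lam - 4 < |f x - intAvg f (D a b p.1.1 p.1.2)|}) :=
          measure_mono hincl
      _ ≤ ∑' p : Sel a b g, volume
            {x ∈ D a b p.1.1 p.1.2 | lam - 4 < |f x - intAvg f (D a b p.1.1 p.1.2)|} :=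
          measure_iUnion_le _
      _ ≤ ∑' p : Sel a b g,
            ENNReal.ofReal ((2:ℝ) ^ (-(lam - 4 - 1) / 4)) * volume (D a b p.1.1 p.1.2) :=
          ENNReal.tsum_le_tsum hpiece
      _ = ENNReal.ofReal ((2:ℝ) ^ (-(lam - 4 - 1) / 4)) * volume (U a b g) := by
          rw [ENNReal.tsum_mul_left, hUeq]
      _ ≤ ENNReal.ofReal ((2:ℝ) ^ (-(lam - 4 - 1) / 4)) * ENNReal.ofReal ((b - a) / 2) :=
          mul_le_mul_right (volume_U_le hab hgloc hg0 havg) _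
      _ = ENNReal.ofReal ((2:ℝ) ^ (-(lam - 4 - 1) / 4) * ((b - a) / 2)) :=
          (ENNReal.ofReal_mul hcpos).symm
      _ = ENNReal.ofReal ((2:ℝ) ^ (-(lam - 1) / 4) * (b - a)) := by
          congr 1
          have hexp : (2:ℝ) ^ (-(lam - 1) / 4) = (2:ℝ) ^ (-(lam - 4 - 1) / 4) * 2⁻¹ := by
            rw [← Real.rpow_neg_one 2, ← Real.rpow_add (by norm_num : (0:ℝ) < 2)]
            congr 1
            ring
          rw [hexp]
          ring

end MAIN

end JN

/-- The John–Nirenberg inequality in normalized form. -/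
theorem john_nirenberg (f : ℝ → ℝ) (hf : LocallyIntegrable f)
    (hmo : ∀ J : Set ℝ, IsBddInterval J → meanOsc f J ≤ 1) :
    ∀ I : Set ℝ, IsBddInterval I → ∀ lam : ℝ, 0 < lam →
      (volume {x ∈ I | lam < |f x - intAvg f I|}).toReal ≤
        (2 : ℝ) ^ (-(lam - 1) / 4) * (volume I).toReal := by
  intro I hI lam hlam
  obtain ⟨a, b, hab, hIoo, hIcc⟩ := hI
  have hba : (0:ℝ) < b - a := by linarith
  have hae : I =ᵐ[volume] Ico a b := by
    rw [ae_eq_set]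
    constructor
    · apply measure_mono_null (t := {b}) _ (measure_singleton b)
      rintro x ⟨hx1, hx2⟩
      have hx3 := hIcc hx1
      have : ¬(a ≤ x ∧ x < b) := hx2
      have : x = b := by
        rcases lt_or_eq_of_le hx3.2 with h | h
        · exact absurd ⟨hx3.1, h⟩ this
        · exact h
      simp [this]
    · apply measure_mono_null (t := {a}) _ (measure_singleton a)
      rintro x ⟨hx1, hx2⟩
      have : ¬(a < x ∧ x < b) := fun h => hx2 (hIoo h)
      have : x = a := by
        rcases lt_or_eq_of_le hx1.1 with h | h
        · exact absurd ⟨h, hx1.2⟩ this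
        · exact h.symm
      simp [this]
  have hvol : volume I = ENNReal.ofReal (b - a) := by rw [measure_congr hae, Real.volume_Ico]
  have hAvg : intAvg f I = intAvg f (Ico a b) := by
    rw [intAvg, intAvg, setIntegral_congr_set hae, measure_congr hae]
  have hsets : volume {x ∈ I | lam < |f x - intAvg f I|} =
      volume {x ∈ Ico a b | lam < |f x - intAvg f (Ico a b)|} := by
    rw [hAvg]
    apply measure_congr
    have h1 : ∀ (s : Set ℝ), {x ∈ s | lam < |f x - intAvg f (Ico a b)|} =
        {x | lam < |f x - intAvg f (Ico a b)|} ∩ s := by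
      intro s; ext x; simp [Set.mem_sep_iff, and_comm]
    rw [h1 I, h1 (Ico a b)]
    exact ae_eq_set_inter (Filter.EventuallyEq.refl _ _) hae
  have hN : lam ≤ 4 * (⌈lam⌉₊ : ℝ) + 5 := by
    have h1 := Nat.le_ceil lam
    have h2 : (0:ℝ) ≤ (⌈lam⌉₊ : ℝ) := Nat.cast_nonneg _
    linarith
  have hcore := JN.core hf hmo ⌈lam⌉₊ lam hlam hN a b hab
  have hrhs : (2 : ℝ) ^ (-(lam - 1) / 4) * (volume I).toReal =
      (2 : ℝ) ^ (-(lam - 1) / 4) * (b - a) := by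
    rw [hvol, ENNReal.toReal_ofReal hba.le]
  rw [hrhs, hsets]
  apply ENNReal.toReal_le_of_le_ofReal
  · have := Real.rpow_pos_of_pos (show (0:ℝ) < 2 by norm_num) (-(lam - 1) / 4)
    positivity
  · exact hcore
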